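/- Let Ω ⊆ ℝⁿ be open, u ∈ C¹(Ω, ℝᴺ), Ω' compactly contained in Ω, and A : ℝⁿ → ℝᴺ affine. Define h(t) := ‖Du + t DA‖²_{L^∞(Ω')} − ‖Du‖²_{L^∞(Ω')} for t ≥ 0, and let Ω'(u) := { x ∈ closure(Ω') : |Du(x)| = ‖Du‖_{L^∞(Ω')} }. Then h is convex, h(0) = 0, and liminf_{t→0⁺} h(t)/t ≥ max_{y ∈ Ω'(u)} { 2 Du(y) : DA }. -/

import Mathlib

open scoped BigOperators
open Filter

/-- The gradient matrix `Du(x) ∈ ℝ^{N×n}` of `u : ℝⁿ → ℝᴺ`. -/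
noncomputable def gradm {n N : ℕ} (u : (Fin n → ℝ) → (Fin N → ℝ)) (x : Fin n → ℝ) :
    Matrix (Fin N) (Fin n) ℝ :=
  fun α i => fderiv ℝ u x (Pi.single i 1) α

/-- The Frobenius (Euclidean) norm of an `N×n` matrix. -/
noncomputable def mnorm {n N : ℕ} (M : Matrix (Fin N) (Fin n) ℝ) : ℝ :=
  Real.sqrt (∑ α, ∑ i, (M α i) ^ 2)

/-- The Frobenius inner product `M : P` of two `N×n` matrices. -/
def finner {n N : ℕ} (M P : Matrix (Fin N) (Fin n) ℝ) : ℝ :=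
  ∑ α, ∑ i, M α i * P α i

noncomputable def toE {n N : ℕ} (M : Matrix (Fin N) (Fin n) ℝ) :
    EuclideanSpace ℝ (Fin N × Fin n) := WithLp.toLp 2 (fun p : Fin N × Fin n => M p.1 p.2)

lemma mnorm_eq {n N : ℕ} (M : Matrix (Fin N) (Fin n) ℝ) : mnorm M = ‖toE M‖ := by
  rw [mnorm, EuclideanSpace.norm_eq]
  congr 1
  rw [Fintype.sum_prod_type]
  simp [toE, sq_abs, Real.norm_eq_abs]

lemma finner_eq {n N : ℕ} (M P : Matrix (Fin N) (Fin n) ℝ) :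
    finner M P = inner ℝ (toE M) (toE P) := by
  rw [finner, PiLp.inner_apply, Fintype.sum_prod_type]
  simp [toE, RCLike.inner_apply, mul_comm]

lemma toE_add {n N : ℕ} (M P : Matrix (Fin N) (Fin n) ℝ) : toE (M + P) = toE M + toE P := rfl
lemma toE_smul {n N : ℕ} (t : ℝ) (M : Matrix (Fin N) (Fin n) ℝ) : toE (t • M) = t • toE M := rfl

lemma mnorm_nonneg {n N : ℕ} (M : Matrix (Fin N) (Fin n) ℝ) : 0 ≤ mnorm M := by
  rw [mnorm_eq]; exact norm_nonneg _

lemma mnorm_sq_add_smul {n N : ℕ} (M Q : Matrix (Fin N) (Fin n) ℝ) (t : ℝ) :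
    mnorm (M + t • Q) ^ 2 = mnorm M ^ 2 + 2 * t * finner M Q + t ^ 2 * mnorm Q ^ 2 := by
  rw [mnorm_eq, mnorm_eq, mnorm_eq, finner_eq, toE_add, toE_smul, norm_add_sq_real,
    real_inner_smul_right, norm_smul]
  simp [mul_pow]
  ring

lemma mnorm_conv {n N : ℕ} (M P : Matrix (Fin N) (Fin n) ℝ) (a b : ℝ) (ha : 0 ≤ a) (hb : 0 ≤ b) :
    mnorm (a • M + b • P) ≤ a * mnorm M + b * mnorm P := by
  rw [mnorm_eq, mnorm_eq, mnorm_eq, toE_add, toE_smul, toE_smul]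
  calc ‖a • toE M + b • toE P‖ ≤ ‖a • toE M‖ + ‖b • toE P‖ := norm_add_le _ _
    _ = a * ‖toE M‖ + b * ‖toE P‖ := by rw [norm_smul, norm_smul, Real.norm_eq_abs,
        Real.norm_eq_abs, abs_of_nonneg ha, abs_of_nonneg hb]

lemma mnorm_add_smul_le {n N : ℕ} (M Q : Matrix (Fin N) (Fin n) ℝ) {t : ℝ} (ht : 0 ≤ t) :
    mnorm (M + t • Q) ≤ mnorm M + t * mnorm Q := by
  have := mnorm_conv M Q 1 t zero_le_one ht
  simpa using this

/-- Lemma 3.2: `h(t) := ‖Du + t DA‖²_{L^∞(Ω')} − ‖Du‖²_{L^∞(Ω')}` is convex,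
vanishes at `0`, and its lower right Dini derivative at `0` is at least
`max_{y ∈ Ω'(u)} { 2 Du(y) : DA }`, where `Ω'(u)` is the set of points of `closure Ω'`
where `|Du|` attains the value `‖Du‖_{L^∞(Ω')}`. -/
theorem stmt2 {n N : ℕ} (Ω : Set (Fin n → ℝ)) (hΩ : IsOpen Ω)
    (u : (Fin n → ℝ) → (Fin N → ℝ)) (hu : ContDiffOn ℝ 1 u Ω)
    (Ω' : Set (Fin n → ℝ)) (hΩ' : IsOpen Ω') (hbd : Bornology.IsBounded Ω')
    (hcl : closure Ω' ⊆ Ω)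
    (DA : Matrix (Fin N) (Fin n) ℝ)
    (h : ℝ → ℝ)
    (hdef : ∀ t : ℝ, h t =
      (sSup ((fun y => mnorm (gradm u y + t • DA)) '' closure Ω')) ^ 2 -
        (sSup ((fun y => mnorm (gradm u y)) '' closure Ω')) ^ 2) :
    ConvexOn ℝ (Set.Ici (0 : ℝ)) h ∧ h 0 = 0 ∧
      sSup ((fun y => 2 * finner (gradm u y) DA) ''
          {x ∈ closure Ω' |
            mnorm (gradm u x) = sSup ((fun y => mnorm (gradm u y)) '' closure Ω')}) ≤
        Filter.liminf (fun t => h t / t) (nhdsWithin 0 (Set.Ioi 0)) := by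
  set K := closure Ω' with hKdef
  by_cases hne : K.Nonempty
  · -- main case
    have hK : IsCompact K := Metric.isCompact_of_isClosed_isBounded isClosed_closure hbd.closure
    have hfd : ContinuousOn (fderiv ℝ u) Ω := hu.continuousOn_fderiv_of_isOpen hΩ le_rfl
    have hentry : ∀ (α : Fin N) (i : Fin n),
        ContinuousOn (fun y => fderiv ℝ u y (Pi.single i 1) α) K := by
      intro α i
      exact ((continuous_apply α).comp
        (ContinuousLinearMap.apply ℝ (Fin N → ℝ) (Pi.single i 1)).continuous).comp_continuousOn
        (hfd.mono hcl)
    have hgcont : ∀ t : ℝ, ContinuousOn (fun y => mnorm (gradm u y + t • DA)) K := by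
      intro t
      have heq : (fun y => mnorm (gradm u y + t • DA)) =
          fun y => Real.sqrt (∑ α, ∑ i, (fderiv ℝ u y (Pi.single i 1) α + t * DA α i) ^ 2) := by
        funext y
        simp [mnorm, gradm, Matrix.add_apply, Matrix.smul_apply, smul_eq_mul]
      rw [heq]
      apply Real.continuous_sqrt.comp_continuousOn
      apply continuousOn_finset_sum
      intro α _
      apply continuousOn_finset_sum
      intro i _
      exact ((hentry α i).add continuousOn_const).pow 2
    set f : ℝ → ℝ := fun t => sSup ((fun y => mnorm (gradm u y + t • DA)) '' K) with hfdef
    have hf00 : (fun y => mnorm (gradm u y + (0:ℝ) • DA)) = fun y => mnorm (gradm u y) := by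
      funext y; simp
    set c : ℝ := sSup ((fun y => mnorm (gradm u y)) '' K) with hcdef
    have hfc : f 0 = c := by rw [hfdef]; simp only [hf00]; rfl
    have hbdd : ∀ t : ℝ, BddAbove ((fun y => mnorm (gradm u y + t • DA)) '' K) :=
      fun t => (hK.image_of_continuousOn (hgcont t)).bddAbove
    have hbdd0 : BddAbove ((fun y => mnorm (gradm u y)) '' K) := by
      rw [← hf00]; exact hbdd 0
    have hle : ∀ (t : ℝ) (y : Fin n → ℝ), y ∈ K → mnorm (gradm u y + t • DA) ≤ f t :=
      fun t y hy => le_csSup (hbdd t) ⟨y, hy, rfl⟩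
    have hle0 : ∀ (y : Fin n → ℝ), y ∈ K → mnorm (gradm u y) ≤ c :=
      fun y hy => le_csSup hbdd0 ⟨y, hy, rfl⟩
    have hfnn : ∀ t : ℝ, 0 ≤ f t := by
      intro t
      obtain ⟨y, hy⟩ := hne
      exact le_trans (mnorm_nonneg _) (hle t y hy)
    have hcnn : 0 ≤ c := by rw [← hfc]; exact hfnn 0
    have hfconv : ∀ (a b t s : ℝ), 0 ≤ a → 0 ≤ b → a + b = 1 →
        f (a * t + b * s) ≤ a * f t + b * f s := by
      intro a b t s ha hb hab
      apply csSup_le (hne.image _)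
      rintro _ ⟨y, hy, rfl⟩
      have key : gradm u y + (a * t + b * s) • DA =
          a • (gradm u y + t • DA) + b • (gradm u y + s • DA) := by
        have ha1 : a = 1 - b := by linarith
        subst ha1
        ext α i
        simp [Matrix.add_apply, Matrix.smul_apply, smul_eq_mul]
        ring
      show mnorm (gradm u y + (a * t + b * s) • DA) ≤ a * f t + b * f s
      rw [key]
      calc mnorm (a • (gradm u y + t • DA) + b • (gradm u y + s • DA))
          ≤ a * mnorm (gradm u y + t • DA) + b * mnorm (gradm u y + s • DA) :=
            mnorm_conv _ _ a b ha hb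
        _ ≤ a * f t + b * f s :=
            add_le_add (mul_le_mul_of_nonneg_left (hle t y hy) ha)
              (mul_le_mul_of_nonneg_left (hle s y hy) hb)
    have hft : ∀ t : ℝ, h t = f t ^ 2 - c ^ 2 := by
      intro t; rw [hdef t]
    refine ⟨?_, ?_, ?_⟩
    · -- convexity
      refine ⟨convex_Ici 0, ?_⟩
      intro x hx y hy a b ha hb hab
      simp only [smul_eq_mul, hft]
      have h1 := hfconv a b x y ha hb hab
      have h2 := hfnn (a * x + b * y)
      have h3 := hfnn x
      have h4 := hfnn y
      have h5 : f (a * x + b * y) ^ 2 ≤ (a * f x + b * f y) ^ 2 :=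
        pow_le_pow_left₀ h2 h1 2
      have h6 : a * f x ^ 2 + b * f y ^ 2 - (a * f x + b * f y) ^ 2 =
          a * b * (f x - f y) ^ 2 := by
        linear_combination (-(a * f x ^ 2 + b * f y ^ 2)) * hab
      have h7 : a * (f x ^ 2 - c ^ 2) + b * (f y ^ 2 - c ^ 2) =
          a * f x ^ 2 + b * f y ^ 2 - c ^ 2 := by
        linear_combination (-(c ^ 2)) * hab
      have h8 : 0 ≤ a * b * (f x - f y) ^ 2 :=
        mul_nonneg (mul_nonneg ha hb) (sq_nonneg _)
      linarith
    · rw [hft 0, hfc]; ring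
    · -- liminf bound
      obtain ⟨y0, hy0K, hy0max⟩ := hK.exists_isMaxOn hne (hgcont 0)
      have hy0c : mnorm (gradm u y0) = c := by
        apply le_antisymm (hle0 y0 hy0K)
        apply csSup_le (hne.image _)
        rintro _ ⟨y, hy, rfl⟩
        have := hy0max hy
        simpa using this
      have hSne : ((fun y => 2 * finner (gradm u y) DA) ''
          {x | x ∈ K ∧ mnorm (gradm u x) = c}).Nonempty :=
        ⟨_, ⟨y0, ⟨hy0K, hy0c⟩, rfl⟩⟩
      apply csSup_le hSne
      rintro _ ⟨y, ⟨hyK, hyc⟩, rfl⟩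
      have hcb : IsCoboundedUnder (· ≥ ·) (nhdsWithin (0:ℝ) (Set.Ioi 0)) (fun t => h t / t) := by
        apply Filter.IsBoundedUnder.isCoboundedUnder_ge
        refine ⟨2 * c * mnorm DA + mnorm DA ^ 2, ?_⟩
        rw [Filter.eventually_map]
        filter_upwards [Ioc_mem_nhdsGT_of_mem (Set.mem_Ico.2 ⟨le_rfl, one_pos⟩)]
        intro t ht
        obtain ⟨ht0, ht1⟩ := ht
        have hub : f t ≤ c + t * mnorm DA := by
          apply csSup_le (hne.image _)
          rintro _ ⟨z, hz, rfl⟩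
          calc mnorm (gradm u z + t • DA) ≤ mnorm (gradm u z) + t * mnorm DA :=
                mnorm_add_smul_le _ _ ht0.le
            _ ≤ c + t * mnorm DA := by gcongr; exact hle0 z hz
        have hsq : f t ^ 2 ≤ (c + t * mnorm DA) ^ 2 :=
          pow_le_pow_left₀ (hfnn t) hub 2
        rw [hft t, div_le_iff₀ ht0]
        nlinarith [hsq, mul_nonneg (mul_nonneg ht0.le (by linarith : (0:ℝ) ≤ 1 - t))
          (sq_nonneg (mnorm DA))]
      apply le_liminf_of_le hcb
      filter_upwards [self_mem_nhdsWithin]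
      intro t ht
      have ht0 : (0:ℝ) < t := ht
      have h1 : mnorm (gradm u y + t • DA) ≤ f t := hle t y hyK
      have h2 : mnorm (gradm u y + t • DA) ^ 2 =
          c ^ 2 + 2 * t * finner (gradm u y) DA + t ^ 2 * mnorm DA ^ 2 := by
        rw [mnorm_sq_add_smul, hyc]
      have h3 : mnorm (gradm u y + t • DA) ^ 2 ≤ f t ^ 2 :=
        pow_le_pow_left₀ (mnorm_nonneg _) h1 2
      rw [le_div_iff₀ ht0, hft t]
      nlinarith [sq_nonneg (t * mnorm DA)]
  · -- K empty
    rw [Set.not_nonempty_iff_eq_empty] at hne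
    have hh : ∀ t, h t = 0 := by
      intro t; rw [hdef t, hne]; simp [Real.sSup_empty]
    have hhfun : h = fun _ => 0 := funext hh
    refine ⟨?_, hh 0, ?_⟩
    · rw [hhfun]; exact convexOn_const 0 (convex_Ici 0)
    · have : {x | x ∈ K ∧ mnorm (gradm u x) =
          sSup ((fun y => mnorm (gradm u y)) '' K)} = ∅ := by
        rw [hne]; ext x; simp
      rw [this]
      simp only [Set.image_empty, Real.sSup_empty]
      have : (fun t : ℝ => h t / t) = fun _ => (0:ℝ) := by
        funext t; rw [hh t, zero_div]
      rw [this, Filter.liminf_const]
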